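/- Let f be the harmonic potential function on a finite graph with unit edge resistances corresponding to a unit current flow from x to y (f(x) = 0, f(y) = R_eff(x ↔ y), f harmonic elsewhere). Then f is 1-Lipschitz along edges: for every edge {u,w}, |f(u) − f(w)| ≤ 1. -/

import Mathlib

attribute [local instance] Classical.propDecidable

/-- Dirichlet energy of a function on a finite graph with unit resistances. -/
noncomputable def energy {V : Type} [Fintype V] (G : SimpleGraph V) (f : V → ℝ) : ℝ :=
  (1 / 2) * ∑ u, ∑ w, if G.Adj u w then (f u - f w) ^ 2 else 0

/-- Effective conductance between `x` and `y` (Dirichlet variational principle). -/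
noncomputable def effCond {V : Type} [Fintype V] (G : SimpleGraph V) (x y : V) : ℝ :=
  sInf {e : ℝ | ∃ f : V → ℝ, f x = 0 ∧ f y = 1 ∧ e = energy G f}

/-- Effective resistance between `x` and `y`. -/
noncomputable def effRes {V : Type} [Fintype V] (G : SimpleGraph V) (x y : V) : ℝ :=
  (effCond G x y)⁻¹

section Aux
set_option linter.unusedSectionVars false
variable {V : Type} [Fintype V] (G : SimpleGraph V)

noncomputable def Lap (f : V → ℝ) (u : V) : ℝ := ∑ w, if G.Adj u w then (f u - f w) else 0

lemma ite_skew (f : V → ℝ) (u w : V) :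
    (if G.Adj u w then (f u - f w) else 0) = -(if G.Adj w u then (f w - f u) else 0) := by
  by_cases h : G.Adj u w
  · rw [if_pos h, if_pos h.symm]; ring
  · have h2 : ¬ G.Adj w u := fun h' => h h'.symm
    rw [if_neg h, if_neg h2]; ring

lemma antisym (f : V → ℝ) (S : Finset V) :
    ∑ u ∈ S, ∑ w ∈ S, (if G.Adj u w then (f u - f w) else 0) = 0 := by
  have h2 : ∑ u ∈ S, ∑ w ∈ S, (if G.Adj u w then (f u - f w) else 0)
      = ∑ u ∈ S, ∑ w ∈ S, -(if G.Adj u w then (f u - f w) else 0) := by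
    conv_lhs => rw [Finset.sum_comm]
    exact Finset.sum_congr rfl fun u _ => Finset.sum_congr rfl fun w _ => ite_skew G f w u
  simp only [Finset.sum_neg_distrib] at h2
  linarith

lemma pairing (f h : V → ℝ) :
    ∑ u, ∑ w, (if G.Adj u w then (f u - f w) * (h u - h w) else 0)
      = 2 * ∑ u, h u * Lap G f u := by
  have key : ∀ u w : V, (if G.Adj u w then (f u - f w) * (h u - h w) else 0)
      = (if G.Adj u w then (f u - f w) * h u else 0)
        + (if G.Adj w u then (f w - f u) * h w else 0) := by
    intro u w
    by_cases hc : G.Adj u w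
    · have hc2 : G.Adj w u := hc.symm
      simp only [if_pos hc, if_pos hc2]; ring
    · have hc2 : ¬ G.Adj w u := fun h' => hc h'.symm
      simp only [if_neg hc, if_neg hc2]; ring
  have hsplit : ∑ u, ∑ w, (if G.Adj u w then (f u - f w) * (h u - h w) else 0)
      = (∑ u, ∑ w, (if G.Adj u w then (f u - f w) * h u else 0))
        + ∑ u, ∑ w, (if G.Adj w u then (f w - f u) * h w else 0) := by
    rw [← Finset.sum_add_distrib]
    exact Finset.sum_congr rfl fun u _ => by
      rw [← Finset.sum_add_distrib]
      exact Finset.sum_congr rfl fun w _ => key u w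
  have hswap : ∑ u, ∑ w, (if G.Adj w u then (f w - f u) * h w else 0)
      = ∑ u, ∑ w, (if G.Adj u w then (f u - f w) * h u else 0) := Finset.sum_comm
  have hA : ∑ u, ∑ w, (if G.Adj u w then (f u - f w) * h u else 0) = ∑ u, h u * Lap G f u := by
    refine Finset.sum_congr rfl fun u _ => ?_
    rw [Lap, Finset.mul_sum]
    exact Finset.sum_congr rfl fun w _ => by split_ifs <;> ring
  rw [hsplit, hswap, hA]; ring

lemma energy_eq (f : V → ℝ) : energy G f = ∑ u, f u * Lap G f u := by
  have hpt : ∀ u w : V, (if G.Adj u w then (f u - f w) ^ 2 else 0)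
      = (if G.Adj u w then (f u - f w) * (f u - f w) else 0) := by
    intro u w; rw [sq]
  rw [energy, Finset.sum_congr rfl fun u _ => Finset.sum_congr rfl fun w _ => hpt u w,
    pairing G f f]
  ring

lemma energy_nonneg (f : V → ℝ) : 0 ≤ energy G f := by
  rw [energy]
  apply mul_nonneg (by norm_num)
  refine Finset.sum_nonneg fun u _ => Finset.sum_nonneg fun w _ => ?_
  split_ifs
  · positivity
  · exact le_refl 0

lemma dirichlet (x y : V) (g h : V → ℝ) (hg : ∀ u, u ≠ x → u ≠ y → Lap G g u = 0)
    (hx : h x = g x) (hy : h y = g y) : energy G g ≤ energy G h := by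
  set d : V → ℝ := fun v => h v - g v with hd
  have hB : ∑ u, ∑ w, (if G.Adj u w then (g u - g w) * (d u - d w) else 0) = 0 := by
    rw [pairing G g d]
    have hz : ∑ u, d u * Lap G g u = 0 := Finset.sum_eq_zero fun u _ => by
      by_cases hux : u = x
      · subst hux; simp [hd, hx]
      · by_cases huy : u = y
        · subst huy; simp [hd, hy]
        · rw [hg u hux huy]; ring
    rw [hz]; ring
  have hpt : ∀ u w : V, (if G.Adj u w then (h u - h w) ^ 2 else 0)
      = (if G.Adj u w then (g u - g w) ^ 2 else 0)
        + ((if G.Adj u w then (d u - d w) ^ 2 else 0)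
        + 2 * (if G.Adj u w then (g u - g w) * (d u - d w) else 0)) := by
    intro u w
    by_cases hc : G.Adj u w <;> simp only [if_pos, if_neg, hc, if_true, if_false] <;>
      simp [hd] <;> ring
  have hsum : ∑ u, ∑ w, (if G.Adj u w then (h u - h w) ^ 2 else 0)
      = ∑ u, ∑ w, (if G.Adj u w then (g u - g w) ^ 2 else 0)
        + (∑ u, ∑ w, (if G.Adj u w then (d u - d w) ^ 2 else 0)
        + 2 * ∑ u, ∑ w, (if G.Adj u w then (g u - g w) * (d u - d w) else 0)) := by
    rw [Finset.sum_congr rfl fun u _ => Finset.sum_congr rfl fun w _ => hpt u w]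
    simp only [Finset.sum_add_distrib, Finset.mul_sum]
  have hEd : 0 ≤ energy G d := energy_nonneg G d
  have hfin : energy G h = energy G g + energy G d := by
    simp only [energy] at *
    rw [hsum, hB]; ring
  linarith

lemma edge_sq_le (f : V → ℝ) {u w : V} (huw : G.Adj u w) :
    (f u - f w) ^ 2 ≤ 2 * energy G f := by
  have h1 : (if G.Adj u w then (f u - f w) ^ 2 else 0)
      ≤ ∑ w', if G.Adj u w' then (f u - f w') ^ 2 else 0 :=
    Finset.single_le_sum (f := fun w' => if G.Adj u w' then (f u - f w') ^ 2 else 0)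
      (fun i _ => by split_ifs <;> positivity) (Finset.mem_univ w)
  have h2 : (∑ w', if G.Adj u w' then (f u - f w') ^ 2 else 0)
      ≤ ∑ u', ∑ w', if G.Adj u' w' then (f u' - f w') ^ 2 else 0 :=
    Finset.single_le_sum (f := fun u' => ∑ w', if G.Adj u' w' then (f u' - f w') ^ 2 else 0)
      (fun i _ => Finset.sum_nonneg fun j _ => by split_ifs <;> positivity)
      (Finset.mem_univ u)
  rw [if_pos huw] at h1
  have h3 : 2 * energy G f = ∑ u', ∑ w', if G.Adj u' w' then (f u' - f w') ^ 2 else 0 := by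
    rw [energy]; ring
  linarith

lemma walk_bound (f : V → ℝ) (c : ℝ) (hedge : ∀ u w : V, G.Adj u w → |f u - f w| ≤ c) :
    ∀ {a b : V} (p : G.Walk a b), |f a - f b| ≤ p.length * c := by
  intro a b p
  induction p with
  | nil => simp
  | @cons a' m b' huv q ih =>
    have h1 := hedge _ _ huv
    have h2 : |f a' - f b'| ≤ |f a' - f m| + |f m - f b'| := abs_sub_le _ _ _
    rw [SimpleGraph.Walk.length_cons]
    push_cast
    linarith

lemma effCond_pos {x y : V} (hconn : G.Connected) (hxy : x ≠ y) : 0 < effCond G x y := by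
  obtain ⟨p⟩ := hconn.preconnected x y
  set L : ℝ := (p.length : ℝ) with hLdef
  have hL : 1 ≤ L := by
    have h0 : p.length ≠ 0 := fun h0 => hxy (p.eq_of_length_eq_zero h0)
    have h1 := Nat.one_le_iff_ne_zero.mpr h0
    rw [hLdef]
    exact_mod_cast h1
  have hlb : ∀ e ∈ {e : ℝ | ∃ f : V → ℝ, f x = 0 ∧ f y = 1 ∧ e = energy G f},
      1 / (2 * L ^ 2) ≤ e := by
    rintro e ⟨h, hx0, hy1, rfl⟩
    have hE0 := energy_nonneg G h
    have hedge : ∀ u w : V, G.Adj u w → |h u - h w| ≤ Real.sqrt (2 * energy G h) := by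
      intro u w huw
      exact Real.abs_le_sqrt (edge_sq_le G h huw)
    have h1 : |h x - h y| ≤ L * Real.sqrt (2 * energy G h) := walk_bound G h _ hedge p
    rw [hx0, hy1] at h1
    have h1' : (1 : ℝ) ≤ L * Real.sqrt (2 * energy G h) := by
      have : |(0 : ℝ) - 1| = 1 := by norm_num
      linarith [this ▸ h1]
    have hs : Real.sqrt (2 * energy G h) ^ 2 = 2 * energy G h :=
      Real.sq_sqrt (by linarith)
    rw [div_le_iff₀ (by positivity)]
    nlinarith [Real.sqrt_nonneg (2 * energy G h), sq_nonneg (L * Real.sqrt (2 * energy G h) - 1)]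
  have hne : ({e : ℝ | ∃ f : V → ℝ, f x = 0 ∧ f y = 1 ∧ e = energy G f}).Nonempty := by
    refine ⟨energy G (fun v => if v = y then 1 else 0), fun v => if v = y then 1 else 0, ?_, ?_, rfl⟩
    · simp [hxy]
    · simp
  calc (0:ℝ) < 1 / (2 * L ^ 2) := by positivity
    _ ≤ effCond G x y := le_csInf hne hlb

end Aux

/-- The harmonic potential of the unit current flow from `x` to `y` is 1-Lipschitz
along edges. -/
theorem potential_lipschitz {V : Type} [Fintype V] (G : SimpleGraph V)
    (hconn : G.Connected) (x y : V) (hxy : x ≠ y) (f : V → ℝ)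
    (hfx : f x = 0) (hfy : f y = effRes G x y)
    (hharm : ∀ u : V, u ≠ x → u ≠ y →
      (Nat.card (G.neighborSet u) : ℝ) * f u =
        ∑ w ∈ (Set.toFinite (G.neighborSet u)).toFinset, f w) :
    ∀ u w : V, G.Adj u w → |f u - f w| ≤ 1 := by
  have hCpos : 0 < effCond G x y := effCond_pos G hconn hxy
  set C : ℝ := effCond G x y with hC
  set R : ℝ := effRes G x y with hR
  have hRC : R = C⁻¹ := rfl
  have hRpos : 0 < R := by rw [hRC]; positivity
  -- interior harmonicity in Laplacian form
  have hLf : ∀ u, u ≠ x → u ≠ y → Lap G f u = 0 := by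
    intro u hux huy
    have hfin : (Set.toFinite (G.neighborSet u)).toFinset
        = Finset.univ.filter (fun w => G.Adj u w) := by
      ext w; simp [SimpleGraph.mem_neighborSet]
    have hcard : (Nat.card (G.neighborSet u) : ℝ)
        = ((Finset.univ.filter (fun w => G.Adj u w)).card : ℝ) := by
      rw [Nat.card_coe_set_eq, Set.ncard_eq_toFinset_card _ (Set.toFinite _), hfin]
    have hh := hharm u hux huy
    rw [hfin, hcard] at hh
    have hLval : Lap G f u
        = ((Finset.univ.filter (fun w => G.Adj u w)).card : ℝ) * f u
          - ∑ w ∈ Finset.univ.filter (fun w => G.Adj u w), f w := by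
      rw [Lap]
      rw [← Finset.sum_filter]
      rw [Finset.sum_sub_distrib, Finset.sum_const, nsmul_eq_mul]
    rw [hLval, hh]; ring
  -- normalized potential
  set g : V → ℝ := fun v => f v / R with hg
  have hgx : g x = 0 := by simp [hg, hfx]
  have hgy : g y = 1 := by simp [hg, ← hR, hfy, div_self hRpos.ne']
  have hLg : ∀ u, Lap G g u = Lap G f u / R := by
    intro u
    rw [Lap, Lap, Finset.sum_div]
    refine Finset.sum_congr rfl fun w _ => ?_
    split_ifs with hc
    · show f u / R - f w / R = (f u - f w) / R
      ring
    · simp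
  have hLgint : ∀ u, u ≠ x → u ≠ y → Lap G g u = 0 := by
    intro u hux huy; rw [hLg, hLf u hux huy, zero_div]
  -- energy of g equals effCond
  have hmem : energy G g ∈ {e : ℝ | ∃ h : V → ℝ, h x = 0 ∧ h y = 1 ∧ e = energy G h} :=
    ⟨g, hgx, hgy, rfl⟩
  have hbdd : BddBelow {e : ℝ | ∃ h : V → ℝ, h x = 0 ∧ h y = 1 ∧ e = energy G h} :=
    ⟨0, by rintro e ⟨h, _, _, rfl⟩; exact energy_nonneg G h⟩
  have hge : C ≤ energy G g := csInf_le hbdd hmem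
  have hle : energy G g ≤ C := by
    refine le_csInf ⟨_, hmem⟩ ?_
    rintro e ⟨h, hhx, hhy, rfl⟩
    exact dirichlet G x y g h hLgint (by rw [hhx, hgx]) (by rw [hhy, hgy])
  have hEg : energy G g = C := le_antisymm hle hge
  -- Laplacian values at y and x
  have hLgy : Lap G g y = C := by
    have h1 := energy_eq G g
    have h2 : ∑ u, g u * Lap G g u = g y * Lap G g y := by
      refine Finset.sum_eq_single y ?_ ?_
      · intro u _ hu
        by_cases hux : u = x
        · subst hux; rw [hgx]; ring
        · rw [hLgint u hux hu]; ring
      · intro hy'; exact absurd (Finset.mem_univ y) hy'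
    rw [hEg, h2, hgy, one_mul] at h1
    exact h1.symm
  have hLfy : Lap G f y = 1 := by
    have h1 := hLg y
    rw [hLgy] at h1
    have h2 : Lap G f y = C * R := (div_eq_iff hRpos.ne').mp h1.symm
    rw [h2, hRC, mul_inv_cancel₀ hCpos.ne']
  have hsumLap : ∑ u, Lap G f u = 0 := by
    have := antisym G f Finset.univ
    simpa [Lap] using this
  have hLfx : Lap G f x = -1 := by
    have h2 : ∑ u ∈ ({x, y} : Finset V), Lap G f u = ∑ u, Lap G f u := by
      refine Finset.sum_subset (Finset.subset_univ _) ?_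
      intro u _ hu
      simp only [Finset.mem_insert, Finset.mem_singleton, not_or] at hu
      exact hLf u hu.1 hu.2
    rw [Finset.sum_pair hxy, hsumLap, hLfy] at h2
    linarith
  -- key one-sided bound
  have hkey : ∀ a b : V, G.Adj a b → f a - f b ≤ 1 := by
    intro a b hab
    rcases le_or_gt (f a) (f b) with hle' | hlt'
    · linarith
    · obtain ⟨t, htmem⟩ := ((Set.Ioo_infinite hlt').diff (Set.finite_range f)).nonempty
      obtain ⟨⟨htb, hta⟩, htr⟩ := htmem
      set S : Finset V := Finset.univ.filter (fun v => f v < t) with hS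
      have hbS : b ∈ S := by simp [hS, htb]
      have haS : a ∉ S := by simp [hS]; exact hta.le
      have haSc : a ∈ Sᶜ := Finset.mem_compl.mpr haS
      have hcut : ∑ u ∈ S, Lap G f u
          = ∑ u ∈ S, ∑ w ∈ Sᶜ, (if G.Adj u w then (f u - f w) else 0) := by
        have h1 : ∀ u, Lap G f u
            = ∑ w ∈ S, (if G.Adj u w then (f u - f w) else 0)
              + ∑ w ∈ Sᶜ, (if G.Adj u w then (f u - f w) else 0) := fun u =>
          (Finset.sum_add_sum_compl S _).symm
        rw [Finset.sum_congr rfl fun u _ => h1 u, Finset.sum_add_distrib,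
          antisym G f S, zero_add]
      have hterm : ∀ u ∈ S, ∀ w ∈ Sᶜ, (if G.Adj u w then (f u - f w) else 0) ≤ 0 := by
        intro u hu w hw
        have hu' : f u < t := by simpa [hS] using hu
        have hw1 : ¬ f w < t := by
          have := Finset.mem_compl.mp hw
          simpa [hS] using this
        have hw2 : t < f w :=
          lt_of_le_of_ne (not_lt.mp hw1) (fun h => htr ⟨w, h.symm⟩)
        split_ifs
        · linarith
        · exact le_refl 0
      have hLHS : (-1 : ℝ) ≤ ∑ u ∈ S, Lap G f u := by
        have hpt : ∀ u ∈ S, (if u = x then (-1 : ℝ) else 0) ≤ Lap G f u := by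
          intro u _
          by_cases hux : u = x
          · subst hux; rw [if_pos rfl, hLfx]
          · rw [if_neg hux]
            by_cases huy : u = y
            · subst huy; rw [hLfy]; norm_num
            · rw [hLf u hux huy]
        have hsumle := Finset.sum_le_sum hpt
        rw [Finset.sum_ite_eq' S x (fun _ => (-1 : ℝ))] at hsumle
        by_cases hxS : x ∈ S
        · rw [if_pos hxS] at hsumle; linarith
        · rw [if_neg hxS] at hsumle; linarith
      have hRHS : ∑ u ∈ S, ∑ w ∈ Sᶜ, (if G.Adj u w then (f u - f w) else 0)
          ≤ f b - f a := by
        have hinner : ∑ w ∈ Sᶜ, (if G.Adj b w then (f b - f w) else 0) ≤ f b - f a := by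
          rw [← Finset.add_sum_erase Sᶜ _ haSc]
          have hrest : ∑ w ∈ Sᶜ.erase a, (if G.Adj b w then (f b - f w) else 0) ≤ 0 :=
            Finset.sum_nonpos fun w hw => hterm b hbS w (Finset.mem_of_mem_erase hw)
          rw [if_pos hab.symm]
          linarith
        rw [← Finset.add_sum_erase S _ hbS]
        have hrest2 : ∑ u ∈ S.erase b, ∑ w ∈ Sᶜ, (if G.Adj u w then (f u - f w) else 0) ≤ 0 :=
          Finset.sum_nonpos fun u hu =>
            Finset.sum_nonpos fun w hw => hterm u (Finset.mem_of_mem_erase hu) w hw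
        linarith
      rw [hcut] at hLHS
      linarith
  intro u w huw
  rw [abs_sub_le_iff]
  exact ⟨hkey u w huw, hkey w u huw.symm⟩
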